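/- In the completion setup, for every ε with 0 < ε < 1 (so that P_ε ⊆ Δ ⊆ L), the closure W of φ(P_ε) in H is a compact neighbourhood of 0 in H; in particular W is compact and has nonempty interior. -/

import Mathlib

open scoped Pointwise

/-- A function `η : G → ℂ` on an additive abelian group is positive definite if all the
finite double sums `∑ i, ∑ j, c i * conj (c j) * η (x i - x j)` are nonnegative reals. -/
def IsPositiveDefiniteFn {G : Type*} [AddCommGroup G] (η : G → ℂ) : Prop :=
  ∀ (N : ℕ) (x : Fin N → G) (c : Fin N → ℂ),
    ∃ r : ℝ, 0 ≤ r ∧ ∑ i, ∑ j, c i * (starRingEnd ℂ) (c j) * η (x i - x j) = (r : ℂ)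

/-- The autocorrelation pseudometric `ρ(s,t) = |1 − η(s−t)/η(0)|^{1/2}`. -/
noncomputable def acRho {G : Type*} [AddCommGroup G] (η : G → ℂ) (s t : G) : ℝ :=
  Real.sqrt ‖1 - η (s - t) / η 0‖

/-- The set of `ε`-almost periods `P_ε = {t : ρ(t,0) < ε}`. -/
noncomputable def almostPeriods {G : Type*} [AddCommGroup G] (η : G → ℂ) (ε : ℝ) : Set G :=
  {t : G | acRho η t 0 < ε}

/-- A subset `P` of a topological abelian group is relatively dense if `P + K = G`
for some compact `K`. -/
def RelativelyDense {G : Type*} [AddCommGroup G] [TopologicalSpace G] (P : Set G) : Prop :=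
  ∃ K : Set G, IsCompact K ∧ P + K = Set.univ

/-- In the completion setup, for `0 < ε < 1` the closure `W` of `φ(P_ε)` in the completion
`H` is a compact neighbourhood of `0`; in particular it is compact with nonempty interior. -/
private theorem acRho_aux_main {G : Type*} [AddCommGroup G] [TopologicalSpace G]
    (η : G → ℂ)
    (hclosed : IsClosed {z : G | η z ≠ 0}) (hdiscrete : DiscreteTopology {z : G | η z ≠ 0})
    (hdense : ∀ ε : ℝ, 0 < ε → RelativelyDense (almostPeriods η ε))
    (L : AddSubgroup G) [PseudoMetricSpace ↥L]
    (hsub : {z : G | η z ≠ 0} ⊆ (L : Set G))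
    (hdist : ∀ s t : ↥L, dist s t = acRho η (s : G) (t : G))
    (ε : ℝ) (hε0 : 0 < ε) (hε1 : ε < 1) :
    IsCompact (closure ((fun t : ↥L => (t : UniformSpace.Completion ↥L)) ''
        {t : ↥L | (t : G) ∈ almostPeriods η ε})) ∧
    closure ((fun t : ↥L => (t : UniformSpace.Completion ↥L)) ''
        {t : ↥L | (t : G) ∈ almostPeriods η ε}) ∈
      nhds (((0 : ↥L) : UniformSpace.Completion ↥L)) ∧
    (interior (closure ((fun t : ↥L => (t : UniformSpace.Completion ↥L)) ''
        {t : ↥L | (t : G) ∈ almostPeriods η ε}))).Nonempty := by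
  classical
  set S : Set ↥L := {t : ↥L | (t : G) ∈ almostPeriods η ε} with hSdef
  set φ : ↥L → UniformSpace.Completion ↥L := fun t => (t : UniformSpace.Completion ↥L) with hφdef
  have hne : ∀ s : G, acRho η s 0 < 1 → η s ≠ 0 := by
    intro s hs hzero
    rw [acRho, sub_zero, hzero, zero_div, sub_zero, norm_one, Real.sqrt_one] at hs
    exact lt_irrefl 1 hs
  have hmemL : ∀ s : G, η s ≠ 0 → s ∈ L := fun s hs => hsub hs
  have hdist0 : ∀ t : ↥L, dist t (0 : ↥L) = acRho η (t : G) 0 := by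
    intro t; rw [hdist]; norm_num
  have hacdiff : ∀ s t : G, acRho η s t = acRho η (s - t) 0 := by
    intro s t; simp [acRho]
  -- Total boundedness of S
  have hTB : TotallyBounded S := by
    rw [Metric.totallyBounded_iff]
    intro δ' hδ'
    set δ : ℝ := min δ' ((1 - ε) / 2) with hδdef
    have hδ0 : 0 < δ := lt_min hδ' (by linarith)
    have hδε : ε + δ < 1 := by
      have : δ ≤ (1 - ε) / 2 := min_le_right _ _
      linarith
    have hδ1 : δ < 1 := by linarith
    obtain ⟨K, hK, hKeq⟩ := hdense δ hδ0
    have hdisc : DiscreteTopology ↥({z : G | η z ≠ 0} ∩ K : Set G) :=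
      DiscreteTopology.of_subset hdiscrete Set.inter_subset_left
    have hfin : ({z : G | η z ≠ 0} ∩ K : Set G).Finite :=
      (hK.inter_left hclosed).finite (isDiscrete_iff_discreteTopology.mpr hdisc)
    refine ⟨{x : ↥L | (x : G) ∈ {z : G | η z ≠ 0} ∩ K}, ?_, ?_⟩
    · exact hfin.preimage (Subtype.val_injective.injOn)
    · intro t ht
      have ht' : acRho η (t : G) 0 < ε := ht
      have htmem : (t : G) ∈ almostPeriods η δ + K := by
        rw [hKeq]; trivial
      obtain ⟨p, hp, k, hk, hpk⟩ := Set.mem_add.1 htmem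
      have hp' : acRho η p 0 < δ := hp
      have hpΔ : η p ≠ 0 := hne p (lt_trans hp' hδ1)
      have hpL : p ∈ L := hmemL p hpΔ
      have hkval : k = (t : G) - p := by rw [← hpk]; abel
      have htri : acRho η ((t : G) - p) 0 < ε + δ := by
        have h1 : acRho η ((t : G) - p) 0 = dist t (⟨p, hpL⟩ : ↥L) := by
          rw [hdist t ⟨p, hpL⟩]; simp [acRho]
        rw [h1]
        calc dist t (⟨p, hpL⟩ : ↥L)
            ≤ dist t (0 : ↥L) + dist (0 : ↥L) (⟨p, hpL⟩ : ↥L) := dist_triangle _ _ _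
          _ = acRho η (t : G) 0 + acRho η p 0 := by
              rw [hdist0, dist_comm, hdist0]
          _ < ε + δ := add_lt_add ht' hp'
      have hkΔ : η k ≠ 0 := by
        rw [hkval]; exact hne _ (lt_trans htri hδε)
      have hkL : k ∈ L := hmemL k hkΔ
      refine Set.mem_iUnion₂.2 ⟨(⟨k, hkL⟩ : ↥L), ⟨hkΔ, hk⟩, ?_⟩
      have h2 : (t : G) - k = p := by rw [hkval]; abel
      rw [Metric.mem_ball, hdist t ⟨k, hkL⟩]
      have h3 : acRho η (t : G) k = acRho η p 0 := by simp [acRho, h2]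
      rw [h3]
      exact lt_of_lt_of_le hp' (min_le_left _ _)
  -- Compactness of the closure
  have hcomp : IsCompact (closure (φ '' S)) :=
    TotallyBounded.isCompact_of_isClosed
      ((hTB.image (UniformSpace.Completion.uniformContinuous_coe ↥L)).closure)
      isClosed_closure
  -- The ball of radius ε around φ 0 is contained in the closure
  have hball : Metric.ball ((0 : ↥L) : UniformSpace.Completion ↥L) ε ⊆ closure (φ '' S) := by
    intro h hh
    rw [mem_closure_iff]
    intro U hU hhU
    have hUopen : IsOpen (U ∩ Metric.ball ((0 : ↥L) : UniformSpace.Completion ↥L) ε) :=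
      hU.inter Metric.isOpen_ball
    obtain ⟨x, hxU, hxball⟩ :=
      (UniformSpace.Completion.denseRange_coe (α := ↥L)).exists_mem_open hUopen ⟨h, hhU, hh⟩
    have hxdist : dist (x : ↥L) (0 : ↥L) < ε := by
      have h3 := Metric.mem_ball.1 hxball
      rwa [UniformSpace.Completion.dist_eq] at h3
    have hxS : x ∈ S := by
      rw [hSdef, Set.mem_setOf_eq, almostPeriods, Set.mem_setOf_eq, ← hdist0]
      exact hxdist
    exact ⟨φ x, hxU, Set.mem_image_of_mem φ hxS⟩
  have hnhds : closure (φ '' S) ∈ nhds ((0 : ↥L) : UniformSpace.Completion ↥L) :=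
    Filter.mem_of_superset (Metric.ball_mem_nhds _ hε0) hball
  exact ⟨hcomp, hnhds, ⟨_, mem_interior_iff_mem_nhds.2 hnhds⟩⟩

theorem closure_image_almostPeriods_compact_nhds {G : Type*} [AddCommGroup G]
    [TopologicalSpace G] [IsTopologicalAddGroup G] [LocallyCompactSpace G] [T2Space G]
    [SigmaCompactSpace G]
    (η : G → ℂ) (hpd : IsPositiveDefiniteFn η) (hη0 : 0 < (η 0).re)
    (hclosed : IsClosed {z : G | η z ≠ 0}) (hdiscrete : DiscreteTopology {z : G | η z ≠ 0})
    (hdense : ∀ ε : ℝ, 0 < ε → RelativelyDense (almostPeriods η ε))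
    [PseudoMetricSpace ↥(AddSubgroup.closure {z : G | η z ≠ 0})]
    (hdist : ∀ s t : ↥(AddSubgroup.closure {z : G | η z ≠ 0}),
      dist s t = acRho η (s : G) (t : G))
    (ε : ℝ) (hε0 : 0 < ε) (hε1 : ε < 1) :
    IsCompact (closure
        ((fun t : ↥(AddSubgroup.closure {z : G | η z ≠ 0}) =>
            (t : UniformSpace.Completion ↥(AddSubgroup.closure {z : G | η z ≠ 0}))) ''
          {t : ↥(AddSubgroup.closure {z : G | η z ≠ 0}) | (t : G) ∈ almostPeriods η ε})) ∧
    closure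
        ((fun t : ↥(AddSubgroup.closure {z : G | η z ≠ 0}) =>
            (t : UniformSpace.Completion ↥(AddSubgroup.closure {z : G | η z ≠ 0}))) ''
          {t : ↥(AddSubgroup.closure {z : G | η z ≠ 0}) | (t : G) ∈ almostPeriods η ε}) ∈
      nhds (((0 : ↥(AddSubgroup.closure {z : G | η z ≠ 0})) :
        UniformSpace.Completion ↥(AddSubgroup.closure {z : G | η z ≠ 0}))) ∧
    (interior (closure
        ((fun t : ↥(AddSubgroup.closure {z : G | η z ≠ 0}) =>
            (t : UniformSpace.Completion ↥(AddSubgroup.closure {z : G | η z ≠ 0}))) ''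
          {t : ↥(AddSubgroup.closure {z : G | η z ≠ 0}) | (t : G) ∈ almostPeriods η ε}))).Nonempty :=
  acRho_aux_main η hclosed hdiscrete hdense _ AddSubgroup.subset_closure hdist ε hε0 hε1
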